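/- Let c be a complex number. Then (1/2π) ∫₀^{2π} ln|e^{iθ} − c| dθ = ln(max{1, |c|}). -/

import Mathlib

open Real Complex MeasureTheory intervalIntegral Metric Set

lemma re_pos_aux {d : ℂ} (hd : ‖d‖ < 1) (z : ℂ) (hz : ‖z‖ ≤ 1) :
    0 < (1 - d * z).re := by
  have h1 : (d*z).re ≤ ‖d*z‖ := Complex.re_le_norm _
  have h2 : ‖d*z‖ ≤ ‖d‖ := by
    rw [norm_mul]
    calc ‖d‖ * ‖z‖ ≤ ‖d‖ * 1 :=
      mul_le_mul_of_nonneg_left hz (norm_nonneg d)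
    _ = ‖d‖ := mul_one _
  simp only [Complex.sub_re, Complex.one_re]
  linarith

lemma meanvalue {d : ℂ} (hd : ‖d‖ < 1) :
    ∫ θ in (0:ℝ)..(2*Real.pi), Real.log (‖1 - d * Complex.exp (θ * Complex.I)‖) = 0 := by
  set f : ℂ → ℂ := fun z => Complex.log (1 - d * z) with hfdef
  have hmem : ∀ z : ℂ, ‖z‖ ≤ 1 → (1 - d * z) ∈ Complex.slitPlane := fun z hz =>
    Complex.mem_slitPlane_iff.2 (Or.inl (re_pos_aux hd z hz))
  have hdiff : ∀ z ∈ closedBall (0:ℂ) 1, DifferentiableAt ℂ f z := by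
    intro z hz
    simp only [mem_closedBall, Complex.dist_eq, sub_zero] at hz
    exact (Complex.differentiableAt_log (hmem z hz)).comp z
      ((differentiableAt_const (1:ℂ)).sub ((differentiableAt_const d).mul differentiableAt_id))
  have hdc : DiffContOnCl ℂ f (ball (0:ℂ) 1) := by
    apply DifferentiableOn.diffContOnCl
    rw [closure_ball (0:ℂ) one_ne_zero]
    exact fun z hz => (hdiff z hz).differentiableWithinAt
  have key := hdc.circleIntegral_sub_inv_smul (w := 0) (by simp)
  have hf0 : f 0 = 0 := by simp [hfdef]
  rw [hf0, smul_zero] at key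
  -- unfold the circle integral
  have hunf : (∮ z in C(0, 1), (z - 0)⁻¹ • f z)
      = Complex.I • ∫ θ in (0:ℝ)..(2*Real.pi), f (Complex.exp (θ * Complex.I)) := by
    rw [circleIntegral, ← intervalIntegral.integral_smul]
    apply intervalIntegral.integral_congr
    intro θ _
    simp only []
    have hne : circleMap 0 1 θ ≠ 0 := circleMap_ne_center one_ne_zero
    rw [deriv_circleMap]
    have : circleMap 0 1 θ = Complex.exp (θ * Complex.I) := by
      simp [circleMap_zero]
    rw [sub_zero, smul_eq_mul, smul_eq_mul, ← this]
    field_simp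
    ring
  rw [hunf] at key
  have hint : (∫ θ in (0:ℝ)..(2*Real.pi), f (Complex.exp (θ * Complex.I))) = 0 := by
    have := smul_eq_zero.mp key
    rcases this with h | h
    · exact absurd h Complex.I_ne_zero
    · exact h
  have hcont : Continuous fun θ : ℝ => f (Complex.exp (θ * Complex.I)) := by
    apply continuous_iff_continuousAt.2
    intro θ
    have habs : ‖Complex.exp ((θ:ℂ) * Complex.I)‖ ≤ 1 := by
      rw [Complex.norm_exp_ofReal_mul_I]
    have hg : ContinuousAt (fun θ : ℝ => 1 - d * Complex.exp ((θ:ℂ) * Complex.I)) θ := by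
      fun_prop
    exact ContinuousAt.comp (x := θ) (g := Complex.log)
      (f := fun θ : ℝ => 1 - d * Complex.exp ((θ:ℂ) * Complex.I))
      (continuousAt_clog (hmem _ habs)) hg
  have hii : IntervalIntegrable (fun θ : ℝ => f (Complex.exp (θ * Complex.I)))
      volume 0 (2*Real.pi) := hcont.intervalIntegrable _ _
  have := Complex.reCLM.intervalIntegral_comp_comm hii
  rw [hint] at this
  simp only [map_zero] at this
  conv_rhs => rw [← this]
  apply intervalIntegral.integral_congr
  intro θ _
  simp only [Complex.reCLM_apply, hfdef]
  rw [Complex.log_re]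


noncomputable def FF : ℝ → ℝ := fun θ => Real.log (‖Complex.exp (θ * Complex.I) - 1‖)

lemma logIntZero {b : ℝ} (hb : 0 < b) : IntervalIntegrable Real.log volume 0 b := by
  have h1 : IntervalIntegrable Real.log volume 0 1 := by
    rw [intervalIntegrable_iff_integrableOn_Ioc_of_le zero_le_one]
    have : IntegrableOn (fun x : ℝ => -Real.log x) (Ioc (0:ℝ) 1) := by
      apply integrableOn_deriv_of_nonneg (g := fun x => x - x * Real.log x)
      · exact (continuous_id.sub Real.continuous_mul_log).continuousOn
      · intro x hx
        have hx0 : x ≠ 0 := ne_of_gt hx.1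
        have := (Real.hasDerivAt_mul_log hx0)
        have h2 := (hasDerivAt_id x).sub this
        exact h2.congr_deriv (by ring)
      · intro x hx
        simp only [neg_nonneg]
        exact Real.log_nonpos hx.1.le hx.2.le
    have h3 : IntegrableOn (fun x : ℝ => -(-Real.log x)) (Ioc (0:ℝ) 1) := this.neg
    simpa only [neg_neg] using h3
  rcases le_or_gt b 1 with h | h
  · apply h1.mono_set
    rw [Set.uIcc_of_le hb.le, Set.uIcc_of_le zero_le_one]
    exact Set.Icc_subset_Icc le_rfl h
  · exact h1.trans (intervalIntegrable_log (Set.notMem_uIcc_of_lt zero_lt_one hb))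

lemma abs_exp_sub_one (θ : ℝ) :
    ‖Complex.exp (θ * Complex.I) - 1‖ = 2 * |Real.sin (θ/2)| := by
  have hnn1 : 0 ≤ ‖Complex.exp (θ * Complex.I) - 1‖ := norm_nonneg _
  have hnn2 : (0:ℝ) ≤ 2 * |Real.sin (θ/2)| := by positivity
  have h2 : ‖Complex.exp (θ * Complex.I) - 1‖ ^ 2 = (2 * |Real.sin (θ/2)|) ^ 2 := by
    rw [Complex.sq_norm, Complex.normSq_apply]
    simp only [Complex.sub_re, Complex.sub_im, Complex.one_re, Complex.one_im,
      Complex.exp_ofReal_mul_I_re, Complex.exp_ofReal_mul_I_im]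
    have c2 : Real.cos θ = 2 * Real.cos (θ/2) ^ 2 - 1 := by
      rw [show θ = 2 * (θ/2) by ring, Real.cos_two_mul]
      ring_nf
    have p1 := Real.sin_sq_add_cos_sq θ
    have p2 := Real.sin_sq_add_cos_sq (θ/2)
    rw [mul_pow, _root_.sq_abs]
    nlinarith [c2, p1, p2]
  rw [← Real.sqrt_sq hnn1, h2, Real.sqrt_sq hnn2]

lemma FFper : Function.Periodic FF (2 * Real.pi) := by
  intro θ
  unfold FF
  congr 2
  push_cast
  rw [add_mul, Complex.exp_add]
  simp [Complex.exp_two_pi_mul_I]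

lemma FFmeas : Measurable FF :=
  Real.measurable_log.comp (continuous_norm.comp
    ((Complex.continuous_exp.comp (by fun_prop)).sub continuous_const)).measurable

lemma FFint0pi : IntervalIntegrable FF volume 0 Real.pi := by
  have hπ : (0:ℝ) < Real.pi := Real.pi_pos
  rw [intervalIntegrable_iff_integrableOn_Ioc_of_le hπ.le]
  set C : ℝ := |Real.log (2/Real.pi)| + Real.log 2 with hC
  have hG : IntegrableOn (fun θ : ℝ => |Real.log θ| + C) (Ioc 0 Real.pi) := by
    apply Integrable.add
    · exact ((intervalIntegrable_iff_integrableOn_Ioc_of_le hπ.le).mp (logIntZero hπ)).abs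
    · exact integrableOn_const measure_Ioc_lt_top.ne
  apply Integrable.mono' hG (FFmeas.aestronglyMeasurable)
  · filter_upwards [ae_restrict_mem measurableSet_Ioc] with θ hθ
    have h1 : (0:ℝ) < θ := hθ.1
    have h2 : θ ≤ Real.pi := hθ.2
    have hhalf1 : 0 ≤ θ/2 := by linarith
    have hhalf2 : θ/2 ≤ Real.pi/2 := by linarith
    have hsin : 2/Real.pi * (θ/2) ≤ Real.sin (θ/2) := Real.mul_le_sin hhalf1 hhalf2
    have hsinpos : 0 < Real.sin (θ/2) := lt_of_lt_of_le (by positivity) hsin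
    have habs : ‖Complex.exp (θ * Complex.I) - 1‖ = 2 * Real.sin (θ/2) := by
      rw [abs_exp_sub_one, abs_of_pos hsinpos]
    have hub : FF θ ≤ Real.log 2 := by
      unfold FF; rw [habs]
      apply Real.log_le_log (by positivity)
      nlinarith [Real.sin_le_one (θ/2)]
    have hlb : Real.log (2/Real.pi) + Real.log θ ≤ FF θ := by
      unfold FF; rw [habs, ← Real.log_mul (by positivity) (ne_of_gt h1)]
      apply Real.log_le_log (by positivity)
      nlinarith
    rw [Real.norm_eq_abs, abs_le]
    constructor
    · have := neg_abs_le (Real.log (2/Real.pi))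
      have := neg_abs_le (Real.log θ)
      simp only [hC]
      linarith [neg_abs_le (Real.log (2/Real.pi)), neg_abs_le (Real.log θ),
        Real.log_nonneg one_le_two]
    · have h2le : Real.log 2 ≤ C := by
        simp only [hC]; linarith [abs_nonneg (Real.log (2/Real.pi))]
      linarith [abs_nonneg (Real.log θ)]

lemma FFsymm (θ : ℝ) : FF (2*Real.pi - θ) = FF θ := by
  unfold FF
  rw [abs_exp_sub_one, abs_exp_sub_one,
    show (2*Real.pi - θ)/2 = Real.pi - θ/2 by ring, Real.sin_pi_sub]

lemma FFshift : ∀ a b : ℝ, IntervalIntegrable FF volume a b →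
    IntervalIntegrable FF volume (a + 2*Real.pi) (b + 2*Real.pi) := by
  intro a b h
  have h2 := h.comp_sub_right (2*Real.pi)
  have he : (fun x => FF (x - 2*Real.pi)) = FF := by
    funext x
    have h3 := FFper (x - 2*Real.pi)
    rw [sub_add_cancel] at h3
    exact h3.symm
  rwa [he] at h2

lemma FFint2pi : IntervalIntegrable FF volume 0 (2*Real.pi) := by
  have hπ := Real.pi_pos
  have h2 : IntervalIntegrable FF volume Real.pi (2*Real.pi) := by
    have h := (FFint0pi.comp_sub_left (2*Real.pi)).symm
    have he : (fun x => FF (2*Real.pi - x)) = FF := funext fun x => FFsymm x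
    rw [he] at h
    have h4 : (2*Real.pi - Real.pi) = Real.pi := by ring
    rw [h4, sub_zero] at h
    exact h
  exact FFint0pi.trans h2

lemma FFintAll : ∀ a b : ℝ, a ∈ Set.Icc (-(2*Real.pi)) (4*Real.pi) →
    b ∈ Set.Icc (-(2*Real.pi)) (4*Real.pi) → IntervalIntegrable FF volume a b := by
  have hπ := Real.pi_pos
  have hA : IntervalIntegrable FF volume (-(2*Real.pi)) 0 := by
    have h2 := FFint2pi.comp_add_right (2*Real.pi)
    have he : (fun x => FF (x + 2*Real.pi)) = FF := funext fun x => FFper x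
    rw [he] at h2
    have e1 : (0:ℝ) - 2*Real.pi = -(2*Real.pi) := by ring
    have e2 : 2*Real.pi - 2*Real.pi = (0:ℝ) := by ring
    rwa [e1, e2] at h2
  have hB : IntervalIntegrable FF volume (2*Real.pi) (4*Real.pi) := by
    have := FFshift 0 (2*Real.pi) FFint2pi
    have e1 : (0:ℝ) + 2*Real.pi = 2*Real.pi := by ring
    have e2 : 2*Real.pi + 2*Real.pi = 4*Real.pi := by ring
    rwa [e1, e2] at this
  have h1 : IntervalIntegrable FF volume (-(2*Real.pi)) (4*Real.pi) :=
    hA.trans (FFint2pi.trans hB)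
  intro a b ha hb
  apply h1.mono_set
  apply Set.uIcc_subset_uIcc <;>
    rw [Set.uIcc_of_le (by linarith : -(2*Real.pi) ≤ 4*Real.pi)]
  · exact ha
  · exact hb

lemma FFdouble {θ : ℝ} (h : Real.sin θ ≠ 0) : FF (2*θ) = FF θ + FF (θ + Real.pi) := by
  have hexp : Complex.exp ((θ:ℂ)*Complex.I) - 1 ≠ 0 := by
    intro h0
    apply h
    have h1 : Complex.exp ((θ:ℂ)*Complex.I) = 1 := sub_eq_zero.mp h0
    have h2 := congrArg Complex.im h1
    simpa [Complex.exp_ofReal_mul_I_im] using h2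
  have hexp2 : Complex.exp ((θ:ℂ)*Complex.I) + 1 ≠ 0 := by
    intro h0
    apply h
    have h1 : Complex.exp ((θ:ℂ)*Complex.I) = -1 := by
      linear_combination h0
    have h2 := congrArg Complex.im h1
    simpa [Complex.exp_ofReal_mul_I_im] using h2
  unfold FF
  have e2 : Complex.exp (((2*θ:ℝ):ℂ) * Complex.I) - 1
      = (Complex.exp ((θ:ℂ)*Complex.I) - 1) * (Complex.exp ((θ:ℂ)*Complex.I) + 1) := by
    have e1 : ((2*θ:ℝ):ℂ) * Complex.I = (θ:ℂ)*Complex.I + (θ:ℂ)*Complex.I := by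
      push_cast; ring
    rw [e1, Complex.exp_add]; ring
  have e3 : Complex.exp (((θ + Real.pi : ℝ):ℂ) * Complex.I) - 1
      = -(Complex.exp ((θ:ℂ)*Complex.I) + 1) := by
    push_cast
    rw [add_mul, Complex.exp_add, Complex.exp_pi_mul_I]; ring
  rw [e2, e3, norm_mul, norm_neg]
  exact Real.log_mul (norm_ne_zero_iff.mpr hexp) (norm_ne_zero_iff.mpr hexp2)

lemma FFzero : (∫ θ in (0:ℝ)..(2*Real.pi), FF θ) = 0 := by
  have hπ := Real.pi_pos
  set I : ℝ := ∫ θ in (0:ℝ)..(2*Real.pi), FF θ with hI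
  have memIcc : ∀ x : ℝ, 0 ≤ x → x ≤ 4*Real.pi → x ∈ Set.Icc (-(2*Real.pi)) (4*Real.pi) := by
    intro x h1 h2; exact ⟨by linarith, h2⟩
  have hint34 : IntervalIntegrable FF volume (2*Real.pi) (4*Real.pi) :=
    FFintAll _ _ (memIcc _ (by linarith) (by linarith)) (memIcc _ (by linarith) le_rfl)
  have hintpi3pi : IntervalIntegrable FF volume Real.pi (3*Real.pi) :=
    FFintAll _ _ (memIcc _ (by linarith) (by linarith)) (memIcc _ (by linarith) (by linarith))
  have hintshift : IntervalIntegrable (fun θ => FF (θ + Real.pi)) volume 0 (2*Real.pi) := by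
    have h2 := hintpi3pi.comp_add_right Real.pi
    have e1 : Real.pi - Real.pi = (0:ℝ) := by ring
    have e2 : 3*Real.pi - Real.pi = 2*Real.pi := by ring
    rwa [e1, e2] at h2
  -- ∫₀^{2π} FF(2θ) = I
  have h1 : (∫ θ in (0:ℝ)..(2*Real.pi), FF (2*θ)) = I := by
    rw [intervalIntegral.integral_comp_mul_left FF two_ne_zero]
    have e : (2:ℝ) * (2*Real.pi) = 4*Real.pi := by ring
    have e0 : (2:ℝ) * 0 = 0 := by ring
    rw [e, e0]
    have hper : (∫ θ in (2*Real.pi)..(4*Real.pi), FF θ) = I := by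
      have h2 := FFper.intervalIntegral_add_eq (2*Real.pi) 0
      have e1 : 2*Real.pi + 2*Real.pi = 4*Real.pi := by ring
      have e2 : (0:ℝ) + 2*Real.pi = 2*Real.pi := by ring
      rwa [e1, e2] at h2
    rw [← intervalIntegral.integral_add_adjacent_intervals FFint2pi hint34, hper]
    simp only [smul_eq_mul, hI]
    ring
  -- ∫₀^{2π} FF(2θ) = I + I
  have h2 : (∫ θ in (0:ℝ)..(2*Real.pi), FF (2*θ)) = I + I := by
    have hcongr : (∫ θ in (0:ℝ)..(2*Real.pi), FF (2*θ))
        = ∫ θ in (0:ℝ)..(2*Real.pi), (FF θ + FF (θ + Real.pi)) := by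
      apply intervalIntegral.integral_congr_ae
      have hzero : ∀ᵐ θ : ℝ, Real.sin θ ≠ 0 := by
        have hcnt : Set.Countable {θ : ℝ | Real.sin θ = 0} := by
          have : {θ : ℝ | Real.sin θ = 0} ⊆ Set.range (fun n : ℤ => (n:ℝ) * Real.pi) := by
            intro x hx
            rcases Real.sin_eq_zero_iff.mp hx with ⟨n, hn⟩
            exact ⟨n, hn⟩
          exact (Set.countable_range _).mono this
        have := hcnt.measure_zero volume
        rw [ae_iff]
        simpa using this
      filter_upwards [hzero] with θ hθ _
      exact FFdouble hθ
    rw [hcongr, intervalIntegral.integral_add FFint2pi hintshift]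
    congr 1
    rw [intervalIntegral.integral_comp_add_right FF Real.pi]
    have h3 := FFper.intervalIntegral_add_eq Real.pi 0
    have e1 : Real.pi + 2*Real.pi = 3*Real.pi := by ring
    have e2 : (0:ℝ) + 2*Real.pi = 2*Real.pi := by ring
    rw [e1, e2] at h3
    have e3 : (0:ℝ) + Real.pi = Real.pi := by ring
    have e4 : 2*Real.pi + Real.pi = 3*Real.pi := by ring
    rw [e3, e4, h3]
  have := h1.symm.trans h2
  linarith

lemma case_one {c : ℂ} (hc : ‖c‖ = 1) :
    (∫ θ in (0:ℝ)..(2*Real.pi),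
      Real.log (‖Complex.exp ((θ:ℂ) * Complex.I) - c‖)) = 0 := by
  set α := Complex.arg c with hα
  have hce : c = Complex.exp ((α:ℂ) * Complex.I) := by
    have h := Complex.norm_mul_exp_arg_mul_I c
    rw [hc] at h
    simpa using h.symm
  have hpt : ∀ θ ∈ Set.uIcc (0:ℝ) (2*Real.pi),
      Real.log (‖Complex.exp ((θ:ℂ) * Complex.I) - c‖) = FF (θ - α) := by
    intro θ _
    unfold FF
    congr 1
    rw [hce]
    have e : Complex.exp ((θ:ℂ)*Complex.I) - Complex.exp ((α:ℂ)*Complex.I)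
        = Complex.exp ((α:ℂ)*Complex.I) * (Complex.exp (((θ - α : ℝ):ℂ) * Complex.I) - 1) := by
      rw [mul_sub, mul_one, ← Complex.exp_add]
      have e2 : (α:ℂ)*Complex.I + ((θ - α : ℝ):ℂ)*Complex.I = (θ:ℂ)*Complex.I := by
        push_cast; ring
      rw [e2]
    rw [e, norm_mul, Complex.norm_exp_ofReal_mul_I, one_mul]
  rw [intervalIntegral.integral_congr hpt,
    intervalIntegral.integral_comp_sub_right FF α]
  have h3 := FFper.intervalIntegral_add_eq (0 - α) 0
  have e1 : 0 - α + 2*Real.pi = 2*Real.pi - α := by ring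
  have e2 : (0:ℝ) + 2*Real.pi = 2*Real.pi := by ring
  rw [e1, e2] at h3
  rw [h3]
  exact FFzero

set_option maxHeartbeats 1000000 in
lemma case_lt {c : ℂ} (hc : ‖c‖ < 1) :
    (∫ θ in (0:ℝ)..(2*Real.pi),
      Real.log (‖Complex.exp ((θ:ℂ) * Complex.I) - c‖)) = 0 := by
  have h := meanvalue (d := (starRingEnd ℂ) c) (by rwa [Complex.norm_conj])
  refine Eq.trans ?_ h
  apply intervalIntegral.integral_congr
  intro θ _
  apply congrArg Real.log
  have e1 : (starRingEnd ℂ) (Complex.exp ((θ:ℂ)*Complex.I))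
      = Complex.exp (((-θ:ℝ):ℂ)*Complex.I) := by
    rw [← Complex.exp_conj]
    congr 1
    rw [map_mul, Complex.conj_I, Complex.conj_ofReal]
    push_cast; ring
  calc ‖Complex.exp ((θ:ℂ)*Complex.I) - c‖
      = ‖(starRingEnd ℂ) (Complex.exp ((θ:ℂ)*Complex.I) - c)‖ :=
        (Complex.norm_conj _).symm
    _ = ‖Complex.exp (((-θ:ℝ):ℂ)*Complex.I) - (starRingEnd ℂ) c‖ := by
        rw [map_sub, e1]
    _ = ‖Complex.exp (((-θ:ℝ):ℂ)*Complex.I)‖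
        * ‖1 - (starRingEnd ℂ) c * Complex.exp ((θ:ℂ)*Complex.I)‖ := by
        rw [← norm_mul]
        congr 1
        rw [mul_sub, mul_one]
        have e2 : Complex.exp (((-θ:ℝ):ℂ)*Complex.I)
            * ((starRingEnd ℂ) c * Complex.exp ((θ:ℂ)*Complex.I))
            = (starRingEnd ℂ) c := by
          rw [mul_comm ((starRingEnd ℂ) c), ← mul_assoc, ← Complex.exp_add]
          have e3 : ((-θ:ℝ):ℂ)*Complex.I + (θ:ℂ)*Complex.I = 0 := by push_cast; ring
          rw [e3, Complex.exp_zero, one_mul]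
        rw [e2]
    _ = ‖1 - (starRingEnd ℂ) c * Complex.exp ((θ:ℂ)*Complex.I)‖ := by
        rw [Complex.norm_exp_ofReal_mul_I, one_mul]

lemma case_gt {c : ℂ} (hc : 1 < ‖c‖) :
    (∫ θ in (0:ℝ)..(2*Real.pi),
      Real.log (‖Complex.exp ((θ:ℂ) * Complex.I) - c‖))
    = 2*Real.pi * Real.log (‖c‖) := by
  have hc0 : c ≠ 0 := by
    intro h; rw [h] at hc; simp at hc; linarith
  have hinv : ‖c⁻¹‖ < 1 := by
    rw [norm_inv]
    exact inv_lt_one_of_one_lt₀ hc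
  have hne : ∀ θ : ℝ, (1 : ℂ) - c⁻¹ * Complex.exp ((θ:ℂ)*Complex.I) ≠ 0 := by
    intro θ h0
    have h1 : (1:ℂ) = c⁻¹ * Complex.exp ((θ:ℂ)*Complex.I) := by linear_combination h0
    have h2 := congrArg (‖·‖) h1
    rw [norm_mul, norm_inv, Complex.norm_exp_ofReal_mul_I, mul_one, norm_one] at h2
    rw [eq_comm, inv_eq_one] at h2
    linarith
  have hpt : ∀ θ ∈ Set.uIcc (0:ℝ) (2*Real.pi),
      Real.log (‖Complex.exp ((θ:ℂ)*Complex.I) - c‖)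
      = Real.log (‖c‖)
        + Real.log (‖1 - c⁻¹ * Complex.exp ((θ:ℂ)*Complex.I)‖) := by
    intro θ _
    have e : Complex.exp ((θ:ℂ)*Complex.I) - c
        = -c * (1 - c⁻¹ * Complex.exp ((θ:ℂ)*Complex.I)) := by
      field_simp
      ring
    rw [e, norm_mul, norm_neg]
    exact Real.log_mul (norm_ne_zero_iff.mpr hc0) (norm_ne_zero_iff.mpr (hne θ))
  have hcont : Continuous fun θ : ℝ =>
      Real.log (‖1 - c⁻¹ * Complex.exp ((θ:ℂ)*Complex.I)‖) := by
    apply Continuous.log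
    · exact continuous_norm.comp (by fun_prop)
    · intro θ
      exact norm_ne_zero_iff.mpr (hne θ)
  rw [intervalIntegral.integral_congr hpt,
    intervalIntegral.integral_add intervalIntegrable_const (hcont.intervalIntegrable _ _),
    meanvalue hinv, add_zero, intervalIntegral.integral_const]
  simp only [smul_eq_mul, sub_zero]

/-- Jensen's formula: `(1/2π) ∫₀^{2π} ln|e^{iθ} − c| dθ = ln(max{1, |c|})`. -/
theorem stmt12 (c : ℂ) :
    (1 / (2 * Real.pi)) *
      ∫ θ in (0 : ℝ)..(2 * Real.pi),
        Real.log (‖Complex.exp (θ * Complex.I) - c‖)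
    = Real.log (max 1 (‖c‖)) := by
  have hπ := Real.pi_pos
  rcases lt_trichotomy (‖c‖) 1 with h | h | h
  · rw [case_lt h, max_eq_left h.le, Real.log_one, mul_zero]
  · rw [case_one h, h, max_self, Real.log_one, mul_zero]
  · rw [case_gt h, max_eq_right h.le]
    field_simp
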